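/- arXiv:2511.22658 — 2 statements merged into one kernel-verified Lean document; each statement's English description precedes it below -/
import Mathlib

section
/- Let G be a group containing a torsion-free abelian normal subgroup M of finite index, and suppose the conjugation action of G/M on M is faithful. Then every abelian subgroup of finite index in G is contained in M. -/
/-- If `M` is a torsion-free abelian normal subgroup of finite index in `G` on which the
conjugation action of `G/M` is faithful, then every abelian finite-index subgroup of `G` is
contained in `M`. -/
theorem stmt6 (G : Type) [Group G] (M : Subgroup G) [M.Normal]
    (hMab : ∀ a b : M, a * b = b * a)
    (hMtf : ∀ g ∈ M, ∀ n : ℕ, n ≠ 0 → g ^ n = 1 → g = 1)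
    (hMfi : M.FiniteIndex)
    (hfaithful : ∀ g : G, (∀ m ∈ M, g * m * g⁻¹ = m) → g ∈ M)
    (A : Subgroup G) (hAfi : A.FiniteIndex) (hAab : ∀ a b : A, a * b = b * a) :
    A ≤ M := by
  intro g hg
  apply hfaithful
  intro m hm
  set H : Subgroup M := A.subgroupOf M with hH
  haveI : (A.subgroupOf M).FiniteIndex := Subgroup.instFiniteIndex_subgroupOf A M
  haveI : H.Normal := by
    constructor
    intro x hx k
    have : k * x * k⁻¹ = x := by
      have := hMab k x
      rw [this, mul_assoc, mul_inv_cancel, mul_one]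
    rwa [this]
  set n := H.index with hn
  have hn0 : n ≠ 0 := Subgroup.FiniteIndex.index_ne_zero
  have hpow : m ^ n ∈ A := by
    have := H.pow_index_mem (⟨m, hm⟩ : M)
    simpa [hH, Subgroup.mem_subgroupOf] using this
  -- g commutes with m ^ n
  have hcomm : g * m ^ n = m ^ n * g := by
    have := hAab ⟨g, hg⟩ ⟨m ^ n, hpow⟩
    exact congrArg Subtype.val this
  have hconj : g * m * g⁻¹ ∈ M := Subgroup.Normal.conj_mem ‹M.Normal› m hm g
  -- key: ((g m g⁻¹) * m⁻¹) ^ n = 1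
  have hx : (g * m * g⁻¹) ^ n = m ^ n := by
    rw [conj_pow]
    rw [hcomm, mul_assoc, mul_inv_cancel, mul_one]
  have hmemprod : (g * m * g⁻¹) * m⁻¹ ∈ M := M.mul_mem hconj (M.inv_mem hm)
  have hprodpow : ((g * m * g⁻¹) * m⁻¹) ^ n = 1 := by
    have hcm : (g * m * g⁻¹) * m⁻¹ = m⁻¹ * (g * m * g⁻¹) := by
      have := hMab ⟨g * m * g⁻¹, hconj⟩ ⟨m⁻¹, M.inv_mem hm⟩
      exact congrArg Subtype.val this
    have : ((g * m * g⁻¹) * m⁻¹) ^ n = (g * m * g⁻¹) ^ n * (m⁻¹) ^ n :=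
      Commute.mul_pow (by rw [Commute, SemiconjBy]; exact hcm) n
    rw [this, hx, inv_pow, mul_inv_cancel]
  have := hMtf _ hmemprod n hn0 hprodpow
  have : g * m * g⁻¹ = m := by
    have h := mul_eq_one_iff_eq_inv.mp this
    rw [h, inv_inv]
  exact this
end

section
/- Let G be a finite group, M a finitely generated free abelian group, and ψ, ψ' : G → Aut(M) two injective homomorphisms, giving semidirect products E = M ⋊_ψ G and E' = M ⋊_{ψ'} G. Then E and E' are isomorphic as groups if and only if there exist an automorphism β of G and an isomorphism φ : M → M of abelian groups such that φ(ψ(x)(m)) = ψ'(β(x))(φ(m)) for all x ∈ G and m ∈ M. -/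
/-- The multiplicative group structure that `AddAut A` carried in the older Mathlib
(`e₁ * e₂ = e₂.trans e₁`); Mathlib now gives `AddAut A` an additive group structure instead. -/
instance addAutGroupOld (A : Type*) [Add A] : Group (AddAut A) where
  mul g h := AddEquiv.trans h g
  one := AddEquiv.refl _
  inv := AddEquiv.symm
  mul_assoc _ _ _ := rfl
  one_mul _ := rfl
  mul_one _ := rfl
  inv_mul_cancel := AddEquiv.self_trans_symm

/-- The canonical homomorphism from additive automorphisms of `M` to multiplicative
automorphisms of `Multiplicative M`. -/
def addAutToMulAut (M : Type*) [AddCommGroup M] : AddAut M →* MulAut (Multiplicative M) where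
  toFun a := AddEquiv.toMultiplicative a
  map_one' := by ext x; rfl
  map_mul' a b := by ext x; rfl

open SemidirectProduct

/-- Conjugation in a semidirect product with commutative kernel. -/
lemma conj_inl_aux {N H : Type} [CommGroup N] [Group H] {φ : H →* MulAut N}
    (e : N ⋊[φ] H) (b : N) : e * inl b * e⁻¹ = inl (φ e.right b) := by
  ext
  · simp only [mul_left, inv_left, left_inl, mul_right, right_inl, mul_one]
    rw [← MulAut.mul_apply, ← map_mul, mul_inv_cancel, map_one, MulAut.one_apply]
    rw [mul_comm e.left, mul_assoc, mul_inv_cancel, mul_one]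
  · simp

/-- Any isomorphism between the two semidirect products maps the kernel `M` into the
kernel `M`. -/
lemma key_aux {G M : Type} [Group G] [Finite G] [AddCommGroup M] [NoZeroSMulDivisors ℤ M]
    (ψ ψ' : G →* AddAut M) (hψ' : Function.Injective ψ')
    (f : (Multiplicative M ⋊[(addAutToMulAut M).comp ψ] G) ≃*
      (Multiplicative M ⋊[(addAutToMulAut M).comp ψ'] G))
    (x : Multiplicative M) : (f (inl x)).right = 1 := by
  set g := (f (inl x)).right with hg
  suffices h : ψ' g = 1 by
    exact hψ' (by rw [h, map_one])
  have n_pos : 0 < Nat.card G := Nat.card_pos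
  ext m₀
  set m' : Multiplicative M := Multiplicative.ofAdd m₀ with hm'
  set e := f.symm (inl m') with he
  have h1 : rightHom (e ^ Nat.card G) = 1 := by
    rw [map_pow, pow_card_eq_one']
  have h2 : e ^ Nat.card G ∈ (inl : Multiplicative M →* _).range := by
    rw [range_inl_eq_ker_rightHom]; exact h1
  obtain ⟨a, ha⟩ := h2
  have h3 : f (inl a) = inl (m' ^ Nat.card G) := by
    rw [ha, map_pow, he, MulEquiv.apply_symm_apply, ← map_pow]
  have h4 : f (inl x) * inl (m' ^ Nat.card G) = inl (m' ^ Nat.card G) * f (inl x) := by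
    simp only [← h3, ← map_mul]
    rw [mul_comm]
  have h5 := congrArg SemidirectProduct.left h4
  simp only [mul_left, right_inl, map_one, MulAut.one_apply, left_inl, ← hg] at h5
  rw [mul_comm (m' ^ Nat.card G)] at h5
  have h6 : ((addAutToMulAut M).comp ψ') g (m' ^ Nat.card G) = m' ^ Nat.card G :=
    mul_left_cancel h5
  have h7 : ψ' g (Nat.card G • m₀) = Nat.card G • m₀ := h6
  rw [map_nsmul] at h7
  have h8 : (Nat.card G : ℤ) • (ψ' g m₀ - m₀) = 0 := by
    rw [smul_sub, sub_eq_zero]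
    exact_mod_cast h7
  have h9 : ψ' g m₀ - m₀ = 0 := by
    rcases smul_eq_zero.mp h8 with h | h
    · exact absurd h (by exact_mod_cast n_pos.ne')
    · exact h
  exact sub_eq_zero.mp h9

/-- For a finite group `G`, a finitely generated free abelian group `M` and faithful actions
`ψ, ψ' : G → Aut(M)`, the semidirect products `M ⋊_ψ G` and `M ⋊_{ψ'} G` are isomorphic iff
there are `β ∈ Aut(G)` and `φ ∈ Aut(M)` with `φ(ψ(x)(m)) = ψ'(β(x))(φ(m))` for all `x, m`. -/
theorem stmt10 (G M : Type) [Group G] [Finite G] [AddCommGroup M]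
    [Module.Free ℤ M] [Module.Finite ℤ M]
    (ψ ψ' : G →* AddAut M) (hψ : Function.Injective ψ) (hψ' : Function.Injective ψ') :
    Nonempty ((Multiplicative M ⋊[(addAutToMulAut M).comp ψ] G) ≃*
        (Multiplicative M ⋊[(addAutToMulAut M).comp ψ'] G)) ↔
      ∃ (β : G ≃* G) (φ : M ≃+ M), ∀ (x : G) (m : M), φ (ψ x m) = ψ' (β x) (φ m) := by
  constructor
  · rintro ⟨f⟩
    -- the image of M is M, in both directions
    haveI : NoZeroSMulDivisors ℤ M :=
      ⟨fun {r m} h => by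
        rcases eq_or_ne r 0 with hr | hr
        · exact Or.inl hr
        · exact Or.inr ((Module.IsTorsionFree.isSMulRegular (M := M) (isRegular_of_ne_zero hr)) (by simpa using h))⟩
    have hM : ∀ x : Multiplicative M, (f (inl x)).right = 1 := key_aux ψ ψ' hψ' f
    have hM' : ∀ x : Multiplicative M, (f.symm (inl x)).right = 1 := key_aux ψ' ψ hψ f.symm
    -- f (inl x) = inl ((f (inl x)).left)
    have hfl : ∀ x : Multiplicative M, f (inl x) = inl ((f (inl x)).left) := by
      intro x; ext
      · simp
      · simp [hM x]
    have hfl' : ∀ x : Multiplicative M, f.symm (inl x) = inl ((f.symm (inl x)).left) := by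
      intro x; ext
      · simp
      · simp [hM' x]
    -- β
    set β₀ : G →* G := rightHom.comp (f.toMonoidHom.comp inr) with hβ₀
    have hβinj : Function.Injective β₀ := by
      intro a b hab
      have h1 : rightHom (f (inr a) * (f (inr b))⁻¹) = 1 := by
        simp only [map_mul, map_inv]
        simpa [hβ₀, mul_inv_eq_one] using hab
      have h2 : f (inr a) * (f (inr b))⁻¹ ∈ (inl : Multiplicative M →* _).range := by
        rw [range_inl_eq_ker_rightHom]; exact h1
      obtain ⟨c, hc⟩ := h2
      have h3 : inr a * (inr b)⁻¹ = f.symm (inl c) := by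
        rw [hc, map_mul, map_inv, MulEquiv.symm_apply_apply, MulEquiv.symm_apply_apply]
      have h4 := congrArg SemidirectProduct.right h3
      simp only [mul_right, right_inr, inv_right, hM' c] at h4
      exact mul_inv_eq_one.mp h4
    obtain ⟨β, hβ⟩ : ∃ β : G ≃* G, ∀ x, β x = β₀ x :=
      ⟨MulEquiv.ofBijective β₀ (Finite.injective_iff_bijective.mp hβinj), fun _ => rfl⟩
    -- Φ
    set Φfun : Multiplicative M → Multiplicative M := fun x => (f (inl x)).left with hΦfun
    set Φinv : Multiplicative M → Multiplicative M := fun x => (f.symm (inl x)).left with hΦinv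
    have hli : Function.LeftInverse Φinv Φfun := by
      intro x
      simp only [hΦfun, hΦinv]
      rw [← hfl x, MulEquiv.symm_apply_apply, left_inl]
    have hri : Function.RightInverse Φinv Φfun := by
      intro x
      simp only [hΦfun, hΦinv]
      rw [← hfl' x, MulEquiv.apply_symm_apply, left_inl]
    have hΦmul : ∀ a b, Φfun (a * b) = Φfun a * Φfun b := by
      intro a b
      simp only [hΦfun, map_mul]
      rw [mul_left, hM a]
      simp
    set Φ : Multiplicative M ≃* Multiplicative M :=
      { toFun := Φfun, invFun := Φinv, left_inv := hli, right_inv := hri, map_mul' := hΦmul }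
      with hΦ
    -- intertwining in multiplicative form
    have hint : ∀ (x : G) (m : Multiplicative M),
        Φ (((addAutToMulAut M).comp ψ) x m) = ((addAutToMulAut M).comp ψ') (β x) (Φ m) := by
      intro x m
      apply inl_injective (φ := (addAutToMulAut M).comp ψ')
      have e1 : inl (Φ (((addAutToMulAut M).comp ψ) x m)) =
          f (inl (((addAutToMulAut M).comp ψ) x m)) := (hfl _).symm
      rw [e1, inl_aut, map_mul, map_mul]
      simp only [map_inv]
      have e2 : f (inr x) * inl (Φ m) * (f (inr x))⁻¹ =
          inl (((addAutToMulAut M).comp ψ') ((f (inr x)).right) (Φ m)) := conj_inl_aux _ _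
      rw [show f (inl m) = inl (Φ m) from hfl m, e2, hβ]
      rfl
    refine ⟨β, AddEquiv.toMultiplicative.symm Φ, fun x m => ?_⟩
    exact hint x (Multiplicative.ofAdd m)
  · rintro ⟨β, φ, hc⟩
    set Φ : Multiplicative M ≃* Multiplicative M := AddEquiv.toMultiplicative φ with hΦ
    have hc' : ∀ (x : G) (m : Multiplicative M),
        Φ (((addAutToMulAut M).comp ψ) x m) = ((addAutToMulAut M).comp ψ') (β x) (Φ m) :=
      fun x m => congrArg Multiplicative.ofAdd (hc x m.toAdd)
    have hc'' : ∀ (x : G) (m : Multiplicative M),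
        Φ.symm (((addAutToMulAut M).comp ψ') x m) =
          ((addAutToMulAut M).comp ψ) (β.symm x) (Φ.symm m) := by
      intro x m
      apply Φ.injective
      rw [hc' (β.symm x), MulEquiv.apply_symm_apply, MulEquiv.apply_symm_apply,
        MulEquiv.apply_symm_apply]
    have hcond : ∀ g : G,
        ((inl : Multiplicative M →* _).comp Φ.toMonoidHom).comp
            (((addAutToMulAut M).comp ψ) g).toMonoidHom =
          (MulAut.conj ((inr : G →* Multiplicative M ⋊[(addAutToMulAut M).comp ψ'] G) (β g))).toMonoidHom.comp
            ((inl : Multiplicative M →* _).comp Φ.toMonoidHom) := by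
      intro g
      refine MonoidHom.ext fun n => ?_
      simp only [MonoidHom.comp_apply, MulEquiv.coe_toMonoidHom, MulAut.conj_apply]
      rw [← MonoidHom.map_inv, ← inl_aut]
      exact congrArg inl (hc' g n)
    have hcond' : ∀ g : G,
        ((inl : Multiplicative M →* _).comp Φ.symm.toMonoidHom).comp
            (((addAutToMulAut M).comp ψ') g).toMonoidHom =
          (MulAut.conj ((inr : G →* Multiplicative M ⋊[(addAutToMulAut M).comp ψ] G) (β.symm g))).toMonoidHom.comp
            ((inl : Multiplicative M →* _).comp Φ.symm.toMonoidHom) := by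
      intro g
      refine MonoidHom.ext fun n => ?_
      simp only [MonoidHom.comp_apply, MulEquiv.coe_toMonoidHom, MulAut.conj_apply]
      rw [← MonoidHom.map_inv, ← inl_aut]
      exact congrArg inl (hc'' g n)
    set F := lift (inl.comp Φ.toMonoidHom) (inr.comp β.toMonoidHom) hcond with hF
    set F' := lift (inl.comp Φ.symm.toMonoidHom) (inr.comp β.symm.toMonoidHom) hcond' with hF'
    refine ⟨MonoidHom.toMulEquiv F F' ?_ ?_⟩
    · apply SemidirectProduct.hom_ext <;> ext x <;>
        simp [hF, hF']
    · apply SemidirectProduct.hom_ext <;> ext x <;>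
        simp [hF, hF']
end
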